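/- For a random n×n matrix A that is the sum of r independent uniformly random n×n permutation matrices, the expectation of the m-th permanental sum perm_m(A) (the sum over all m×m submatrix permanents, equivalently the number of partial permutation patterns of size m counted with multiplicity in A) equals (1/(n!)^r) · C(n,m)^2 · m! · Σ_{m_1+⋯+m_r=m, m_i≥0} [m!/(m_1!⋯m_r!)] · (n−m_1)!⋯(n−m_r)!. -/

import Mathlib

open Finset

/-- The n×n permutation matrix (over ℚ) of a permutation σ. -/
def permMatrix (n : ℕ) (σ : Equiv.Perm (Fin n)) : Matrix (Fin n) (Fin n) ℚ :=
  fun i j => if σ j = i then 1 else 0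

/-- The sum of the r permutation matrices in a tuple. -/
def sumPermMatrices (n r : ℕ) (σ : Fin r → Equiv.Perm (Fin n)) : Matrix (Fin n) (Fin n) ℚ :=
  ∑ i, permMatrix n (σ i)

/-- The m-th permanental sum: the sum over all m-subsets of rows and columns of the
permanent of the corresponding m×m submatrix.  Summing over all pairs of injections
`Fin m ↪ Fin n` counts each (row set, column set, bijection) exactly `m!` times. -/
noncomputable def permSum (n m : ℕ) (A : Matrix (Fin n) (Fin n) ℚ) : ℚ :=
  (∑ f : Fin m ↪ Fin n, ∑ g : Fin m ↪ Fin n, ∏ i, A (f i) (g i)) / (m.factorial : ℚ)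

lemma count_ext (n m : ℕ) (f g : Fin m ↪ Fin n) (s : Finset (Fin m)) :
    (Finset.univ.filter (fun τ : Equiv.Perm (Fin n) => ∀ i ∈ s, τ (g i) = f i)).card
      = (n - s.card).factorial := by
  classical
  set S : Set (Fin n) := ⇑g '' ↑s with hS
  set T : Set (Fin n) := ⇑f '' ↑s with hT
  set e₀ : S ≃ T :=
    (Equiv.Set.image ⇑g ↑s g.injective).symm.trans (Equiv.Set.image ⇑f ↑s f.injective) with he₀
  have hiff : ∀ τ : Equiv.Perm (Fin n),
      (∀ i ∈ s, τ (g i) = f i) ↔ ∀ x : S, τ x = (e₀ x : Fin n) := by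
    intro τ
    constructor
    · rintro h ⟨x, i, hi, rfl⟩
      have h1 : (Equiv.Set.image ⇑g ↑s g.injective).symm
          ⟨g i, Set.mem_image_of_mem _ hi⟩ = ⟨i, hi⟩ :=
        Equiv.Set.image_symm_apply _ _ _ _ _
      simp only [he₀, Equiv.trans_apply, h1, Equiv.Set.image_apply]
      exact h i hi
    · intro h i hi
      have := h ⟨g i, Set.mem_image_of_mem _ hi⟩
      have h1 : (Equiv.Set.image ⇑g ↑s g.injective).symm
          ⟨g i, Set.mem_image_of_mem _ hi⟩ = ⟨i, hi⟩ :=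
        Equiv.Set.image_symm_apply _ _ _ _ _
      simp only [he₀, Equiv.trans_apply, h1] at this
      exact this
  have hcardS : Fintype.card S = s.card := by
    rw [← Nat.card_eq_fintype_card, hS, Nat.card_image_of_injective g.injective]
    simp
  have hcardT : Fintype.card T = s.card := by
    rw [← Nat.card_eq_fintype_card, hT, Nat.card_image_of_injective f.injective]
    simp
  have hcompl : Fintype.card (↥Sᶜ) = n - s.card := by
    rw [Fintype.card_compl_set, hcardS, Fintype.card_fin]
  have hcomplT : Fintype.card (↥Tᶜ) = n - s.card := by
    rw [Fintype.card_compl_set, hcardT, Fintype.card_fin]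
  calc (Finset.univ.filter (fun τ : Equiv.Perm (Fin n) => ∀ i ∈ s, τ (g i) = f i)).card
      = Fintype.card {τ : Equiv.Perm (Fin n) // ∀ i ∈ s, τ (g i) = f i} :=
        (Fintype.card_subtype _).symm
    _ = Fintype.card {τ : Fin n ≃ Fin n // ∀ x : S, τ x = (e₀ x : Fin n)} :=
        Fintype.card_congr (Equiv.subtypeEquivRight hiff)
    _ = Fintype.card ((↥Sᶜ) ≃ (↥Tᶜ)) := Fintype.card_congr (Equiv.Set.compl e₀)
    _ = (n - s.card).factorial := by
        rw [Fintype.card_equiv (Fintype.equivOfCardEq (hcompl.trans hcomplT.symm)), hcompl]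

lemma count_fibers (m r : ℕ) (v : Fin r → ℕ) (hv : ∑ k, v k = m) :
    (Finset.univ.filter (fun c : Fin m → Fin r =>
        ∀ k, (Finset.univ.filter (fun j => c j = k)).card = v k)).card
      * ∏ k, (v k).factorial = m.factorial := by
  classical
  obtain ⟨e⟩ : Nonempty ((Σ k : Fin r, Fin (v k)) ≃ Fin m) := by
    refine ⟨Fintype.equivOfCardEq ?_⟩
    simp [hv]
  set c₀ : Fin m → Fin r := fun j => (e.symm j).1 with hc₀
  have hfib0 : ∀ k, Fintype.card {j // c₀ j = k} = v k := by
    intro k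
    have e1 : {j : Fin m // c₀ j = k} ≃ {s : Σ i : Fin r, Fin (v i) // s.1 = k} :=
      Equiv.subtypeEquiv e.symm (fun j => Iff.rfl)
    have e2 : {s : Σ i : Fin r, Fin (v i) // s.1 = k} ≃ Fin (v k) :=
      { toFun := fun s => Fin.cast (congrArg v s.2) s.1.2
        invFun := fun x => ⟨⟨k, x⟩, rfl⟩
        left_inv := by rintro ⟨⟨i, x⟩, rfl⟩; rfl
        right_inv := fun x => rfl }
    rw [Fintype.card_congr (e1.trans e2), Fintype.card_fin]
  have hfib0' : ∀ k, (Finset.univ.filter (fun j => c₀ j = k)).card = v k := by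
    intro k
    rw [← Fintype.card_subtype]
    exact hfib0 k
  have hstab : Fintype.card {h : Equiv.Perm (Fin m) // c₀ ∘ h = c₀}
      = ∏ k, (v k).factorial := by
    rw [DomMulAct.stabilizer_card]
    exact Finset.prod_congr rfl fun k _ => by rw [hfib0 k]
  have hfibg : ∀ (g : Equiv.Perm (Fin m)) (k : Fin r),
      (Finset.univ.filter (fun j => c₀ (g j) = k)).card
        = (Finset.univ.filter (fun j => c₀ j = k)).card := by
    intro g k
    refine Finset.card_bij' (fun j _ => g j) (fun j _ => g.symm j) ?_ ?_ ?_ ?_ <;> simp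
  have hmaps : ∀ g : Equiv.Perm (Fin m), (c₀ ∘ g) ∈ Finset.univ.filter
      (fun c : Fin m → Fin r => ∀ k, (Finset.univ.filter (fun j => c j = k)).card = v k) := by
    intro g
    simp only [Finset.mem_filter, Finset.mem_univ, true_and]
    intro k
    have h2 := (hfibg g k).trans (hfib0' k)
    simpa [Function.comp] using h2
  have hcount : ∀ c ∈ Finset.univ.filter (fun c : Fin m → Fin r =>
      ∀ k, (Finset.univ.filter (fun j => c j = k)).card = v k),
      (Finset.univ.filter (fun g : Equiv.Perm (Fin m) => c₀ ∘ g = c)).card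
        = ∏ k, (v k).factorial := by
    intro c hc
    have hc' : ∀ k, (Finset.univ.filter (fun j => c j = k)).card = v k :=
      (Finset.mem_filter.mp hc).2
    have eqk : ∀ k : Fin r, {j // c j = k} ≃ {j // c₀ j = k} := fun k =>
      Fintype.equivOfCardEq (by rw [Fintype.card_subtype, Fintype.card_subtype, hc' k, hfib0' k])
    set g₀ : Equiv.Perm (Fin m) :=
      (Equiv.sigmaFiberEquiv c).symm.trans
        ((Equiv.sigmaCongrRight eqk).trans (Equiv.sigmaFiberEquiv c₀)) with hg₀def
    have hg₀ : c₀ ∘ g₀ = c := by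
      funext j
      have h1 : g₀ j = ((eqk (c j)) ⟨j, rfl⟩).1 := rfl
      rw [Function.comp_apply, h1]
      exact ((eqk (c j)) ⟨j, rfl⟩).2
    have : (Finset.univ.filter (fun g : Equiv.Perm (Fin m) => c₀ ∘ g = c)).card
        = (Finset.univ.filter (fun h : Equiv.Perm (Fin m) => c₀ ∘ h = c₀)).card := by
      refine Finset.card_bij' (fun g _ => g * g₀⁻¹) (fun h _ => h * g₀) ?_ ?_ ?_ ?_
      · intro g hg
        simp only [Finset.mem_filter, Finset.mem_univ, true_and] at hg ⊢
        funext j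
        simp only [Function.comp_apply, Equiv.Perm.mul_apply]
        have := congrFun hg (g₀⁻¹ j)
        simp only [Function.comp_apply] at this
        rw [this, ← hg₀]
        simp
      · intro h hh
        simp only [Finset.mem_filter, Finset.mem_univ, true_and] at hh ⊢
        funext j
        simp only [Function.comp_apply, Equiv.Perm.mul_apply]
        have := congrFun hh (g₀ j)
        simp only [Function.comp_apply] at this
        rw [this, ← hg₀]
        simp
      · intro g _; simp [mul_assoc]
      · intro h _; simp [mul_assoc]
    rw [this, ← Fintype.card_subtype, hstab]
  have hkey : Nat.factorial m = (Finset.univ.filter (fun c : Fin m → Fin r =>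
      ∀ k, (Finset.univ.filter (fun j => c j = k)).card = v k)).card
        * ∏ k, (v k).factorial := by
    calc Nat.factorial m = Fintype.card (Equiv.Perm (Fin m)) := by
          rw [Fintype.card_perm, Fintype.card_fin]
      _ = (Finset.univ : Finset (Equiv.Perm (Fin m))).card := rfl
      _ = ∑ c ∈ Finset.univ.filter (fun c : Fin m → Fin r =>
            ∀ k, (Finset.univ.filter (fun j => c j = k)).card = v k),
            (Finset.univ.filter (fun g : Equiv.Perm (Fin m) => c₀ ∘ g = c)).card :=
          Finset.card_eq_sum_card_fiberwise (fun g _ => hmaps g)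
      _ = ∑ c ∈ Finset.univ.filter (fun c : Fin m → Fin r =>
            ∀ k, (Finset.univ.filter (fun j => c j = k)).card = v k),
            ∏ k, (v k).factorial := Finset.sum_congr rfl hcount
      _ = _ := by rw [Finset.sum_const, smul_eq_mul]
  exact hkey.symm

set_option maxHeartbeats 1000000 in
theorem expectation_permSum (n m r : ℕ) (hm : m ≤ n) :
    (1 / ((n.factorial : ℚ)) ^ r) *
        ∑ σ : Fin r → Equiv.Perm (Fin n), permSum n m (sumPermMatrices n r σ) =
      (1 / ((n.factorial : ℚ)) ^ r) * (n.choose m : ℚ) ^ 2 * (m.factorial : ℚ) *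
        ∑ v ∈ Finset.Nat.antidiagonalTuple r m,
          ((m.factorial : ℚ) / ∏ i, ((v i).factorial : ℚ)) *
            ∏ i, ((n - v i).factorial : ℚ) := by
  classical
  have hm0 : (m.factorial : ℚ) ≠ 0 := Nat.cast_ne_zero.mpr m.factorial_ne_zero
  -- Step 1: expand the matrix entries and the product over i.
  have hentry : ∀ (σ : Fin r → Equiv.Perm (Fin n)) (i j : Fin n),
      sumPermMatrices n r σ i j = ∑ k, if σ k j = i then (1 : ℚ) else 0 := by
    intro σ i j
    simp only [sumPermMatrices, Matrix.sum_apply, permMatrix]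
  have hprod : ∀ (σ : Fin r → Equiv.Perm (Fin n)) (f g : Fin m ↪ Fin n),
      (∏ i, sumPermMatrices n r σ (f i) (g i))
        = ∑ c : Fin m → Fin r, ∏ i, (if σ (c i) (g i) = f i then (1 : ℚ) else 0) := by
    intro σ f g
    calc (∏ i, sumPermMatrices n r σ (f i) (g i))
        = ∏ i, ∑ k, (if σ k (g i) = f i then (1 : ℚ) else 0) := by
          exact Finset.prod_congr rfl fun i _ => hentry σ (f i) (g i)
      _ = _ := Fintype.prod_sum _
  -- Step 2: the inner sum over tuples of permutations.
  have hinner : ∀ (f g : Fin m ↪ Fin n) (c : Fin m → Fin r),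
      (∑ σ : Fin r → Equiv.Perm (Fin n), ∏ i, (if σ (c i) (g i) = f i then (1 : ℚ) else 0))
        = ∏ k, ((n - (Finset.univ.filter (fun j => c j = k)).card).factorial : ℚ) := by
    intro f g c
    have h1 : ∀ σ : Fin r → Equiv.Perm (Fin n),
        (∏ i, (if σ (c i) (g i) = f i then (1 : ℚ) else 0))
          = ∏ k, ∏ i ∈ Finset.univ.filter (fun j => c j = k),
              (if σ k (g i) = f i then (1 : ℚ) else 0) := by
      intro σ
      rw [← Finset.prod_fiberwise_of_maps_to (fun i _ => Finset.mem_univ (c i))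
        (fun i => (if σ (c i) (g i) = f i then (1 : ℚ) else 0))]
      refine Finset.prod_congr rfl fun k _ => Finset.prod_congr rfl fun i hi => ?_
      rw [(Finset.mem_filter.mp hi).2]
    calc (∑ σ : Fin r → Equiv.Perm (Fin n), ∏ i, (if σ (c i) (g i) = f i then (1 : ℚ) else 0))
        = ∑ σ : Fin r → Equiv.Perm (Fin n), ∏ k,
            ∏ i ∈ Finset.univ.filter (fun j => c j = k),
              (if σ k (g i) = f i then (1 : ℚ) else 0) := Finset.sum_congr rfl fun σ _ => h1 σ
      _ = ∏ k, ∑ τ : Equiv.Perm (Fin n), ∏ i ∈ Finset.univ.filter (fun j => c j = k),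
            (if τ (g i) = f i then (1 : ℚ) else 0) :=
          (Fintype.prod_sum (κ := fun _ : Fin r => Equiv.Perm (Fin n))
            (f := fun k τ => ∏ i ∈ Finset.univ.filter (fun j => c j = k),
              (if τ (g i) = f i then (1 : ℚ) else 0))).symm
      _ = ∏ k, ((n - (Finset.univ.filter (fun j => c j = k)).card).factorial : ℚ) := by
        refine Finset.prod_congr rfl fun k _ => ?_
        have hb : (∑ τ : Equiv.Perm (Fin n), ∏ i ∈ Finset.univ.filter (fun j => c j = k),
              (if τ (g i) = f i then (1 : ℚ) else 0))
            = ((Finset.univ.filter (fun τ : Equiv.Perm (Fin n) =>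
                ∀ i ∈ Finset.univ.filter (fun j => c j = k), τ (g i) = f i)).card : ℚ) := by
          simp only [Finset.prod_boole]
          simp
        rw [hb, count_ext]
  -- Step 3: regroup by the fiber-count vector.
  have hgroup : (∑ c : Fin m → Fin r,
      ∏ k, ((n - (Finset.univ.filter (fun j => c j = k)).card).factorial : ℚ))
        = ∑ v ∈ Finset.Nat.antidiagonalTuple r m,
            ((Finset.univ.filter (fun c : Fin m → Fin r =>
              ∀ k, (Finset.univ.filter (fun j => c j = k)).card = v k)).card : ℚ)
              * ∏ k, ((n - v k).factorial : ℚ) := by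
    have hmapsAD : ∀ c : Fin m → Fin r, c ∈ (Finset.univ : Finset (Fin m → Fin r)) →
        (fun k => (Finset.univ.filter (fun j => c j = k)).card)
          ∈ Finset.Nat.antidiagonalTuple r m := by
      intro c _
      rw [Finset.Nat.mem_antidiagonalTuple]
      calc ∑ k, (Finset.univ.filter (fun j => c j = k)).card
          = (Finset.univ : Finset (Fin m)).card :=
            (Finset.card_eq_sum_card_fiberwise (fun j _ => Finset.mem_univ (c j))).symm
        _ = m := by simp
    rw [← Finset.sum_fiberwise_of_maps_to hmapsAD]
    refine Finset.sum_congr rfl fun v hv => ?_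
    have hfix : ∀ c ∈ Finset.univ.filter (fun c : Fin m → Fin r =>
        (fun k => (Finset.univ.filter (fun j => c j = k)).card) = v),
        (∏ k, ((n - (Finset.univ.filter (fun j => c j = k)).card).factorial : ℚ))
          = ∏ k, ((n - v k).factorial : ℚ) := by
      intro c hc
      have := (Finset.mem_filter.mp hc).2
      refine Finset.prod_congr rfl fun k _ => ?_
      rw [congrFun this k]
    rw [Finset.sum_congr rfl hfix, Finset.sum_const, nsmul_eq_mul]
    have hfe : (Finset.univ.filter (fun c : Fin m → Fin r =>
        (fun k => (Finset.univ.filter (fun j => c j = k)).card) = v))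
        = Finset.univ.filter (fun c : Fin m → Fin r =>
            ∀ k, (Finset.univ.filter (fun j => c j = k)).card = v k) :=
      Finset.filter_congr fun c _ => by simp [funext_iff]
    rw [hfe]
  -- Step 4: put everything together.
  have key : (∑ σ : Fin r → Equiv.Perm (Fin n), permSum n m (sumPermMatrices n r σ))
      = ((Fintype.card (Fin m ↪ Fin n) : ℚ)) ^ 2 *
          (∑ v ∈ Finset.Nat.antidiagonalTuple r m,
            ((Finset.univ.filter (fun c : Fin m → Fin r =>
              ∀ k, (Finset.univ.filter (fun j => c j = k)).card = v k)).card : ℚ)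
              * ∏ k, ((n - v k).factorial : ℚ)) / (m.factorial : ℚ) := by
    unfold permSum
    rw [← Finset.sum_div]
    congr 1
    calc (∑ σ : Fin r → Equiv.Perm (Fin n), ∑ f : Fin m ↪ Fin n, ∑ g : Fin m ↪ Fin n,
          ∏ i, sumPermMatrices n r σ (f i) (g i))
        = ∑ σ : Fin r → Equiv.Perm (Fin n), ∑ f : Fin m ↪ Fin n, ∑ g : Fin m ↪ Fin n,
            ∑ c : Fin m → Fin r, ∏ i, (if σ (c i) (g i) = f i then (1 : ℚ) else 0) := by
          refine Finset.sum_congr rfl fun σ _ => Finset.sum_congr rfl fun f _ =>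
            Finset.sum_congr rfl fun g _ => ?_
          exact hprod σ f g
      _ = ∑ f : Fin m ↪ Fin n, ∑ g : Fin m ↪ Fin n, ∑ c : Fin m → Fin r,
            ∑ σ : Fin r → Equiv.Perm (Fin n),
              ∏ i, (if σ (c i) (g i) = f i then (1 : ℚ) else 0) := by
          rw [Finset.sum_comm]
          refine Finset.sum_congr rfl fun f _ => ?_
          rw [Finset.sum_comm]
          refine Finset.sum_congr rfl fun g _ => ?_
          rw [Finset.sum_comm]
      _ = ∑ f : Fin m ↪ Fin n, ∑ g : Fin m ↪ Fin n, ∑ c : Fin m → Fin r,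
            ∏ k, ((n - (Finset.univ.filter (fun j => c j = k)).card).factorial : ℚ) := by
          refine Finset.sum_congr rfl fun f _ => Finset.sum_congr rfl fun g _ =>
            Finset.sum_congr rfl fun c _ => ?_
          exact hinner f g c
      _ = ((Fintype.card (Fin m ↪ Fin n) : ℚ)) ^ 2 *
            ∑ v ∈ Finset.Nat.antidiagonalTuple r m,
              ((Finset.univ.filter (fun c : Fin m → Fin r =>
                ∀ k, (Finset.univ.filter (fun j => c j = k)).card = v k)).card : ℚ)
                * ∏ k, ((n - v k).factorial : ℚ) := by
          rw [Finset.sum_const, Finset.sum_const, Finset.card_univ, hgroup]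
          push_cast
          ring
  rw [key]
  -- rewrite the multinomial count and the embedding count
  have hcardE : ((Fintype.card (Fin m ↪ Fin n) : ℚ))
      = (m.factorial : ℚ) * (n.choose m : ℚ) := by
    rw [Fintype.card_embedding_eq, Fintype.card_fin, Fintype.card_fin,
      Nat.descFactorial_eq_factorial_mul_choose]
    push_cast
    ring
  have hN : ∀ v ∈ Finset.Nat.antidiagonalTuple r m,
      ((Finset.univ.filter (fun c : Fin m → Fin r =>
        ∀ k, (Finset.univ.filter (fun j => c j = k)).card = v k)).card : ℚ)
        = (m.factorial : ℚ) / ∏ i, ((v i).factorial : ℚ) := by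
    intro v hv
    have hsum : ∑ k, v k = m := Finset.Nat.mem_antidiagonalTuple.mp hv
    have hprod0 : (∏ i, ((v i).factorial : ℚ)) ≠ 0 := by
      refine Finset.prod_ne_zero_iff.mpr fun i _ => ?_
      exact Nat.cast_ne_zero.mpr (v i).factorial_ne_zero
    rw [eq_div_iff hprod0]
    have := count_fibers m r v hsum
    have := congrArg (fun x : ℕ => (x : ℚ)) this
    push_cast at this
    convert this using 2
  have hsum : (∑ v ∈ Finset.Nat.antidiagonalTuple r m,
      ((Finset.univ.filter (fun c : Fin m → Fin r =>
        ∀ k, (Finset.univ.filter (fun j => c j = k)).card = v k)).card : ℚ)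
        * ∏ k, ((n - v k).factorial : ℚ))
      = ∑ v ∈ Finset.Nat.antidiagonalTuple r m,
          ((m.factorial : ℚ) / ∏ i, ((v i).factorial : ℚ)) * ∏ i, ((n - v i).factorial : ℚ) :=
    Finset.sum_congr rfl fun v hv => by rw [hN v hv]
  rw [hsum, hcardE]
  have hn0 : (n.factorial : ℚ) ≠ 0 := Nat.cast_ne_zero.mpr n.factorial_ne_zero
  field_simp
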